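/- Uniqueness of solutions to the truncated BBGKY hierarchy: if {γ^{(n)}(t)}_{n=0}^N and {θ^{(n)}(t)}_{n=0}^N both lie in L^∞(ℝ, 𝔖_{1,H_n^0}(𝓗^n)), satisfy the Duhamel-form hierarchy γ^{(n)}(t) = e^{-itH_n} γ^{(n)}(0) e^{itH_n} − i(n+1) Σ_{j=1}^n ∫₀ᵗ e^{-i(t−s)H_n} Tr_{n+1}([h_{n+1}^{-1/2} w_{j,n+1} h_{n+1}^{-1/2}, h_{n+1}^{1/2} γ^{(n+1)}(s) h_{n+1}^{1/2}]) e^{i(t−s)H_n} ds with γ^{(N+1)} ≡ 0, and have the same initial data γ^{(n)}(0) = θ^{(n)}(0) for all n, then γ^{(n)}(t) = θ^{(n)}(t) for all n and t. -/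

import Mathlib

open scoped InnerProductSpace
open Filter MeasureTheory intervalIntegral

noncomputable section

universe u

/-- If `⟪a, v⟫ = 0` for all `a` in a set with dense span, then `v = 0`. -/
lemma bbgky_aux_inner_ext {E : Type u} [NormedAddCommGroup E] [InnerProductSpace ℂ E]
    {s : Set E} (hs : (Submodule.span ℂ s).topologicalClosure = ⊤)
    {v : E} (hv : ∀ a ∈ s, ⟪a, v⟫_ℂ = 0) : v = 0 := by
  have h2 : Submodule.span ℂ s ≤ LinearMap.ker (innerSL ℂ v : E →ₗ[ℂ] ℂ) := by
    rw [Submodule.span_le]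
    intro a ha
    have : ⟪v, a⟫_ℂ = 0 := by rw [← inner_conj_symm, hv a ha, map_zero]
    simpa [LinearMap.mem_ker] using this
  have h3 : (⊤ : Submodule ℂ E) ≤ LinearMap.ker (innerSL ℂ v : E →ₗ[ℂ] ℂ) := by
    rw [← hs]
    exact Submodule.topologicalClosure_minimal _ h2 (ContinuousLinearMap.isClosed_ker (innerSL ℂ v))
  have h4 : ⟪v, v⟫_ℂ = 0 := by simpa using h3 (Submodule.mem_top (x := v))
  exact inner_self_eq_zero.mp h4

/-- An operator whose matrix elements vanish on sets with dense span is zero. -/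
lemma bbgky_aux_op_ext {E : Type u} [NormedAddCommGroup E] [InnerProductSpace ℂ E]
    {s t : Set E} (hs : (Submodule.span ℂ s).topologicalClosure = ⊤)
    (ht : (Submodule.span ℂ t).topologicalClosure = ⊤)
    {D : E →L[ℂ] E} (h : ∀ a ∈ s, ∀ b ∈ t, ⟪a, D b⟫_ℂ = 0) : D = 0 := by
  have key : ∀ b, ∀ a ∈ s, ⟪a, D b⟫_ℂ = 0 := by
    intro b a ha
    have hF : Submodule.span ℂ t ≤ LinearMap.ker ((innerSL ℂ a).comp D : E →ₗ[ℂ] ℂ) := by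
      rw [Submodule.span_le]
      intro b' hb'
      simpa [LinearMap.mem_ker] using h a ha b' hb'
    have h3 : (⊤ : Submodule ℂ E) ≤ LinearMap.ker ((innerSL ℂ a).comp D : E →ₗ[ℂ] ℂ) := by
      rw [← ht]
      exact Submodule.topologicalClosure_minimal _ hF (ContinuousLinearMap.isClosed_ker ((innerSL ℂ a).comp D))
    simpa using h3 (Submodule.mem_top (x := b))
  ext b
  simpa using bbgky_aux_inner_ext hs (fun a ha => key b a ha)

section Defs

variable {E : Type u} [NormedAddCommGroup E] [InnerProductSpace ℂ E] [CompleteSpace E]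

/-- The trace norm of `A` is at most `C`. -/
def TraceNormLE (A : E →L[ℂ] E) (C : ℝ) : Prop :=
  ∀ (n : ℕ) (e f : Fin n → E), Orthonormal ℂ e → Orthonormal ℂ f →
    ∑ i, ‖(⟪e i, A (f i)⟫_ℂ)‖ ≤ C

/-- `U` is a strongly continuous one-parameter unitary group. -/
def IsUnitaryGroup (U : ℝ → (E →L[ℂ] E)) : Prop :=
  U 0 = 1 ∧ (∀ s t : ℝ, U (s + t) = (U s).comp (U t)) ∧
    (∀ t : ℝ, ContinuousLinearMap.adjoint (U t) = U (-t)) ∧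
    ∀ x : E, Continuous fun t : ℝ => U t x

end Defs

variable {Hn : ℕ → Type u} [∀ n, NormedAddCommGroup (Hn n)]
  [∀ n, InnerProductSpace ℂ (Hn n)] [∀ n, CompleteSpace (Hn n)]

/-- A solution of the truncated BBGKY hierarchy, in Duhamel form:
`γ^{(n)}(t) = e^{-itH_n} γ^{(n)}(0) e^{itH_n}`
`− i(n+1) ∑_{j=1}^n ∫₀ᵗ e^{-i(t−s)H_n} Tr_{n+1}([W_{j,n+1}, Θ^{(n+1)}(s)]) e^{i(t−s)H_n} ds`,
where `Θ^{(n+1)} = h_{n+1}^{1/2} γ^{(n+1)} h_{n+1}^{1/2}` (so that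
`γ^{(n+1)} = g Θ^{(n+1)} g` with `g = h_{n+1}^{-1/2}` acting on the last particle) and
`W_{j,n+1} = h_{n+1}^{-1/2} w_{j,n+1} h_{n+1}^{-1/2}` is bounded; the solution is required
to lie in `L^∞(ℝ, 𝔖_{1,H_n^0})`. -/
def IsBBGKYSolution
    (ptr : ∀ m n : ℕ, (Hn m →L[ℂ] Hn m) → (Hn n →L[ℂ] Hn n))
    (U : ∀ n, ℝ → (Hn n →L[ℂ] Hn n))
    (gO : ∀ n, Hn (n + 1) →L[ℂ] Hn (n + 1))
    (W : ∀ n, Fin n → (Hn (n + 1) →L[ℂ] Hn (n + 1)))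
    (N : ℕ)
    (γ Θ : ∀ n, ℝ → (Hn n →L[ℂ] Hn n)) : Prop :=
  -- vanishing above the particle number cutoff (`γ^{(N+1)} ≡ 0`)
  (∀ n t, N < n → γ n t = 0 ∧ Θ n t = 0) ∧
  -- `γ^{(n+1)} = h_{n+1}^{-1/2} Θ^{(n+1)} h_{n+1}^{-1/2}`
  (∀ n t, γ (n + 1) t = (gO n).comp ((Θ (n + 1) t).comp (gO n))) ∧
  -- uniform trace-norm (energy) bound: `L^∞(ℝ, 𝔖_{1,H^0})`
  (∃ C : ℝ, ∀ n t, TraceNormLE (γ n t) C ∧ TraceNormLE (Θ n t) C) ∧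
  -- integrability of the Duhamel integrand
  (∀ (n : ℕ) (j : Fin n) (t : ℝ), IntervalIntegrable
    (fun s => (U n (t - s)).comp
      ((ptr (n + 1) n ((W n j).comp (Θ (n + 1) s) - (Θ (n + 1) s).comp (W n j))).comp
        (U n (s - t)))) volume 0 t) ∧
  -- the Duhamel-form hierarchy
  (∀ n, n ≤ N → ∀ t : ℝ,
    γ n t = (U n t).comp ((γ n 0).comp (U n (-t))) -
      (Complex.I * ((n : ℂ) + 1)) • ∑ j : Fin n, ∫ s in (0:ℝ)..t,
        (U n (t - s)).comp
          ((ptr (n + 1) n ((W n j).comp (Θ (n + 1) s) - (Θ (n + 1) s).comp (W n j))).comp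
            (U n (s - t))))

/-- **Uniqueness for the truncated BBGKY hierarchy.**  Two solutions of the hierarchy in
`L^∞(ℝ, 𝔖_{1,H^0})` with the same initial data coincide for all times (the hierarchy is
triangular: the top equation is free and uniqueness propagates downward). -/
theorem bbgky_hierarchy_uniqueness
    {H : Type u} [NormedAddCommGroup H] [InnerProductSpace ℂ H] [CompleteSpace H]
    (tp : ∀ n, Hn n → H → Hn (n + 1))
    (htp_inner : ∀ n (x y : Hn n) (f g : H),
      ⟪tp n x f, tp n y g⟫_ℂ = ⟪x, y⟫_ℂ * ⟪f, g⟫_ℂ)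
    (htp_linL : ∀ n (f : H), IsLinearMap ℂ (fun x : Hn n => tp n x f))
    (htp_linR : ∀ n (x : Hn n), IsLinearMap ℂ (tp n x))
    (htp_dense : ∀ n, (Submodule.span ℂ
      (Set.range fun p : Hn n × H => tp n p.1 p.2)).topologicalClosure = ⊤)
    (ptr : ∀ m n : ℕ, (Hn m →L[ℂ] Hn m) → (Hn n →L[ℂ] Hn n))
    (hptr_lin : ∀ m n, IsLinearMap ℂ (ptr m n))
    (hptr_id : ∀ n G, ptr n n G = G)
    (hptr_step : ∀ n (G : Hn (n + 1) →L[ℂ] Hn (n + 1)) (x y : Hn n)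
      (ι : Type u) (e : HilbertBasis ι ℂ H),
      HasSum (fun i => ⟪tp n x (e i), G (tp n y (e i))⟫_ℂ) ⟪x, ptr (n + 1) n G y⟫_ℂ)
    (hptr_comp : ∀ m n : ℕ, n ≤ m → ∀ (G : Hn (m + 1) →L[ℂ] Hn (m + 1)),
      ptr (m + 1) n G = ptr m n (ptr (m + 1) m G))
    -- the dynamics `U n t = e^{-itH_n}` generated by the interacting Hamiltonians
    (U : ∀ n, ℝ → (Hn n →L[ℂ] Hn n))
    (hU : ∀ n, IsUnitaryGroup (U n))
    -- `g = h^{-1/2}` (with `h ≥ 1`) and its action `gO n` on the last particle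
    (g : H →L[ℂ] H)
    (hgpos : g.IsPositive) (hginj : Function.Injective g) (hgnorm : ‖g‖ ≤ 1)
    (gO : ∀ n, Hn (n + 1) →L[ℂ] Hn (n + 1))
    (hgO : ∀ n (x : Hn n) (f : H), gO n (tp n x f) = tp n x (g f))
    -- the bounded sandwiched interactions `W_{j,n+1} = h_{n+1}^{-1/2} w_{j,n+1} h_{n+1}^{-1/2}`
    (W : ∀ n, Fin n → (Hn (n + 1) →L[ℂ] Hn (n + 1)))
    (N : ℕ)
    (γ Θ γ' Θ' : ∀ n, ℝ → (Hn n →L[ℂ] Hn n))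
    (hsol : IsBBGKYSolution ptr U gO W N γ Θ)
    (hsol' : IsBBGKYSolution ptr U gO W N γ' Θ')
    (hinit : ∀ n, γ n 0 = γ' n 0) :
    ∀ n t, γ n t = γ' n t := by
  -- g is self-adjoint
  have hgsa : ∀ u v : H, ⟪g u, v⟫_ℂ = ⟪u, g v⟫_ℂ := by
    intro u v
    have hadj : ContinuousLinearMap.adjoint g = g :=
      ContinuousLinearMap.isSelfAdjoint_iff'.mp hgpos.isSelfAdjoint
    rw [← ContinuousLinearMap.adjoint_inner_left g v u, hadj]
  -- g has dense range
  have hgdense : ∀ f : H, f ∈ closure (Set.range g) := by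
    have htop : (LinearMap.range (g : H →ₗ[ℂ] H)).topologicalClosure = ⊤ := by
      rw [Submodule.topologicalClosure_eq_top_iff, Submodule.eq_bot_iff]
      intro y hy
      have h1 : ⟪g (g y), y⟫_ℂ = 0 :=
        (Submodule.mem_orthogonal _ y).mp hy (g (g y)) (LinearMap.mem_range_self _ _)
      have h2 : ⟪g y, g y⟫_ℂ = 0 := by rw [← hgsa (g y) y]; exact h1
      have h3 : g y = 0 := inner_self_eq_zero.mp h2
      exact hginj (by simpa using h3)
    intro f
    have : f ∈ (LinearMap.range (g : H →ₗ[ℂ] H)).topologicalClosure := htop ▸ Submodule.mem_top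
    rw [← SetLike.mem_coe, Submodule.topologicalClosure_coe, LinearMap.coe_range] at this
    simpa using this
  -- norm of elementary tensors, and continuity in the second slot
  have htp_norm : ∀ n (x : Hn n) (f : H), ‖tp n x f‖ = ‖x‖ * ‖f‖ := by
    intro n x f
    have h2 := inner_self_eq_norm_sq_to_K (𝕜 := ℂ) (tp n x f)
    rw [htp_inner, inner_self_eq_norm_sq_to_K, inner_self_eq_norm_sq_to_K] at h2
    have h3 : ‖x‖ ^ 2 * ‖f‖ ^ 2 = ‖tp n x f‖ ^ 2 := by exact_mod_cast h2
    exact ((sq_eq_sq₀ (norm_nonneg _) (by positivity)).mp (by rw [mul_pow, ← h3]))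
  -- the span of `tp x (g f)` is dense
  have hdenseg : ∀ n, (Submodule.span ℂ
      (Set.range fun p : Hn n × H => tp n p.1 (g p.2))).topologicalClosure = ⊤ := by
    intro n
    set M := Submodule.span ℂ (Set.range fun p : Hn n × H => tp n p.1 (g p.2)) with hM
    have hsub : Submodule.span ℂ (Set.range fun p : Hn n × H => tp n p.1 p.2) ≤
        M.topologicalClosure := by
      rw [Submodule.span_le]
      rintro _ ⟨⟨x, f⟩, rfl⟩
      let Tx : H →L[ℂ] Hn (n + 1) :=
        LinearMap.mkContinuous (IsLinearMap.mk' _ (htp_linR n x)) ‖x‖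
          (fun f' => by simp [htp_norm n x f'])
      have hTx : ∀ f', Tx f' = tp n x f' := fun _ => rfl
      have hmaps : Set.MapsTo Tx (Set.range g) (M : Set (Hn (n + 1))) := by
        rintro _ ⟨u, rfl⟩
        rw [hTx]
        exact Submodule.subset_span ⟨(x, u), rfl⟩
      have : Tx f ∈ closure (M : Set (Hn (n + 1))) :=
        map_mem_closure Tx.continuous (hgdense f) hmaps
      rw [hTx] at this
      simpa [Submodule.topologicalClosure_coe] using this
    refine top_unique ?_
    rw [← htp_dense n]
    exact Submodule.topologicalClosure_minimal _ hsub M.isClosed_topologicalClosure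
  -- moving `g` across the inner product
  have hmove : ∀ n (x : Hn n) (f : H) (z : Hn (n + 1)),
      ⟪tp n x (g f), z⟫_ℂ = ⟪tp n x f, gO n z⟫_ℂ := by
    intro n x f z
    set F : Hn (n + 1) →L[ℂ] ℂ :=
      innerSL ℂ (tp n x (g f)) - (innerSL ℂ (tp n x f)).comp (gO n) with hF
    have hker : Submodule.span ℂ (Set.range fun p : Hn n × H => tp n p.1 p.2) ≤
        LinearMap.ker (F : Hn (n + 1) →ₗ[ℂ] ℂ) := by
      rw [Submodule.span_le]
      rintro _ ⟨⟨y, f'⟩, rfl⟩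
      have : F (tp n y f') = 0 := by
        simp only [hF, ContinuousLinearMap.sub_apply, ContinuousLinearMap.comp_apply,
          innerSL_apply_apply, hgO, htp_inner, hgsa]
        ring
      simpa [LinearMap.mem_ker] using this
    have h3 : (⊤ : Submodule ℂ (Hn (n + 1))) ≤ LinearMap.ker (F : Hn (n + 1) →ₗ[ℂ] ℂ) := by
      rw [← htp_dense n]
      exact Submodule.topologicalClosure_minimal _ hker (ContinuousLinearMap.isClosed_ker F)
    have h4 : F z = 0 := h3 (Submodule.mem_top (x := z))
    have h5 : ⟪tp n x (g f), z⟫_ℂ - ⟪tp n x f, gO n z⟫_ℂ = 0 := by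
      simpa [hF, ContinuousLinearMap.sub_apply, ContinuousLinearMap.comp_apply,
        innerSL_apply_apply] using h4
    exact sub_eq_zero.mp h5
  -- Θ is determined by γ
  have hTheta : ∀ n (t : ℝ), γ (n + 1) t = γ' (n + 1) t → Θ (n + 1) t = Θ' (n + 1) t := by
    intro n t hγeq
    have h1 := hsol.2.1 n t
    have h2 := hsol'.2.1 n t
    rw [hγeq] at h1
    have hD : (gO n).comp (((Θ (n + 1) t) - (Θ' (n + 1) t)).comp (gO n)) = 0 := by
      ext v
      have hv := congrArg (fun A : Hn (n + 1) →L[ℂ] Hn (n + 1) => A v) (h1.symm.trans h2)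
      simp only [ContinuousLinearMap.comp_apply] at hv
      simp [ContinuousLinearMap.comp_apply, ContinuousLinearMap.sub_apply, map_sub, hv]
    have hzero : (Θ (n + 1) t) - (Θ' (n + 1) t) = 0 := by
      apply bbgky_aux_op_ext (hdenseg n) (hdenseg n)
      rintro _ ⟨⟨x, f⟩, rfl⟩ _ ⟨⟨y, f'⟩, rfl⟩
      dsimp only
      rw [← hgO n y f', hmove n x f]
      have : gO n (((Θ (n + 1) t) - (Θ' (n + 1) t)) (gO n (tp n y f'))) = 0 := by
        have := congrArg (fun A : Hn (n + 1) →L[ℂ] Hn (n + 1) => A (tp n y f')) hD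
        simpa [ContinuousLinearMap.comp_apply] using this
      rw [this, inner_zero_right]
    have := sub_eq_zero.mp hzero
    exact this
  -- downward induction on the hierarchy
  have main : ∀ d n, N ≤ n + d → ∀ t, γ n t = γ' n t := by
    intro d
    induction d with
    | zero =>
      intro n hn t
      rcases lt_or_eq_of_le (by simpa using hn : N ≤ n) with hlt | heq
      · rw [(hsol.1 n t hlt).1, (hsol'.1 n t hlt).1]
      · have hnN : n ≤ N := heq.ge
        have hΘ : ∀ s : ℝ, Θ (n + 1) s = Θ' (n + 1) s := fun s => by
          rw [(hsol.1 (n + 1) s (by omega)).2, (hsol'.1 (n + 1) s (by omega)).2]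
        rw [hsol.2.2.2.2 n hnN t, hsol'.2.2.2.2 n hnN t, hinit n]
        simp only [hΘ]
    | succ d ih =>
      intro n hn t
      by_cases hcase : N ≤ n + d
      · exact ih n hcase t
      · have hnN : n ≤ N := by omega
        have hΘ : ∀ s : ℝ, Θ (n + 1) s = Θ' (n + 1) s := fun s =>
          hTheta n s (ih (n + 1) (by omega) s)
        rw [hsol.2.2.2.2 n hnN t, hsol'.2.2.2.2 n hnN t, hinit n]
        simp only [hΘ]
  exact fun n t => main N n (by omega) t
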